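/- Let q be a natural number and let J₀ denote the real matrix indexed by Fin q ⊕ Fin q given in block form by J₀ = Matrix.fromBlocks 0 (−1) 1 0 (the canonical complex structure on ℝ^{2q}). Let G be the group of orthogonal real matrices indexed by Fin q ⊕ Fin q (those A with Aᵀ * A = 1), and let H ≤ G be the subgroup of those A that commute with J₀. Then the map A ↦ A * J₀ * Aᵀ induces a well-defined bijection from the quotient G/H onto the set {J | Jᵀ * J = 1 ∧ J * J = −1} of orthogonal complex structures on ℝ^{2q}. (This is the canonical identification of the twistor fiber Z(q) with a homogeneous space of the orthogonal group, the orthogonal-group analogue of the diffeomorphism SO(2q)/U(q) ≅ Z(q) given by A·U(q) ↦ A J₀ A⁻¹.) -/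

import Mathlib

open Matrix

/-- The canonical complex structure `J₀` on `ℝ^{2q}`. -/
def J0 (q : ℕ) : Matrix (Fin q ⊕ Fin q) (Fin q ⊕ Fin q) ℝ :=
  Matrix.fromBlocks 0 (-1) 1 0

lemma J0_mem_orthogonalGroup (q : ℕ) :
    J0 q ∈ Matrix.orthogonalGroup (Fin q ⊕ Fin q) ℝ := by
  constructor <;>
    simp [Matrix.star_eq_conjTranspose, Matrix.conjTranspose_eq_transpose_of_trivial, J0,
      Matrix.fromBlocks_transpose, Matrix.fromBlocks_multiply, ← Matrix.fromBlocks_one]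

/-- `J₀` as an element of the orthogonal group. -/
def J0ₒ (q : ℕ) : Matrix.orthogonalGroup (Fin q ⊕ Fin q) ℝ :=
  ⟨J0 q, J0_mem_orthogonalGroup q⟩

/-- The subgroup of the orthogonal group `O(2q)` consisting of elements commuting
with `J₀`. -/
def commutantJ0 (q : ℕ) : Subgroup (Matrix.orthogonalGroup (Fin q ⊕ Fin q) ℝ) :=
  Subgroup.centralizer {J0ₒ q}

section Aux

open Module

local notation "⟪" x ", " y "⟫" => @inner ℝ _ _ x y

/-- Any finite-dimensional real inner product space of dimension at least `2q` equipped
with an orthogonal complex structure `j` admits an orthonormal family `v` indexed by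
`Fin q ⊕ Fin q` with `j (v (inl k)) = v (inr k)`. -/
lemma ocs_family : ∀ (q : ℕ) (V : Type) [NormedAddCommGroup V] [InnerProductSpace ℝ V]
    [FiniteDimensional ℝ V] (j : V →ₗ[ℝ] V)
    (_ : ∀ x, j (j x) = -x) (_ : ∀ x y, ⟪j x, j y⟫ = ⟪x, y⟫)
    (_ : 2 * q ≤ finrank ℝ V),
    ∃ v : Fin q ⊕ Fin q → V, Orthonormal ℝ v ∧ ∀ k, j (v (Sum.inl k)) = v (Sum.inr k) := by
  intro q
  induction q with
  | zero =>
    intro V _ _ _ j _ _ _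
    refine ⟨Sum.elim Fin.elim0 Fin.elim0, ⟨?_, ?_⟩, fun k => k.elim0⟩
    · rintro (i | i) <;> exact i.elim0
    · rintro (i | i) <;> exact i.elim0
  | succ q ih =>
    intro V _ _ _ j hj2 hji hdim
    -- pick a unit vector e
    have hpos : 0 < finrank ℝ V := by omega
    have : Nontrivial V := (finrank_pos_iff (R := ℝ) (M := V)).mp hpos
    obtain ⟨u, hu⟩ := exists_ne (0 : V)
    obtain ⟨e, he⟩ : ∃ e : V, ‖e‖ = 1 := ⟨‖u‖⁻¹ • u, norm_smul_inv_norm hu⟩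
    have hje : ‖j e‖ = 1 := by
      have := hji e e
      rw [real_inner_self_eq_norm_mul_norm, real_inner_self_eq_norm_mul_norm, he] at this
      nlinarith [norm_nonneg (j e)]
    have horth : ⟪e, j e⟫ = 0 := by
      have h1 : ⟪j e, j (j e)⟫ = ⟪e, j e⟫ := hji e (j e)
      rw [hj2, inner_neg_right] at h1
      have hc : ⟪j e, e⟫ = ⟪e, j e⟫ := real_inner_comm e (j e)
      linarith
    set S : Submodule ℝ V := Submodule.span ℝ {e, j e} with hS_def
    have heS : e ∈ S := Submodule.subset_span (by simp)
    have hjeS : j e ∈ S := Submodule.subset_span (by simp)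
    have hWinv : ∀ x ∈ Sᗮ, j x ∈ Sᗮ := by
      intro x hx
      rw [Submodule.mem_orthogonal]
      intro y hy
      rw [hS_def] at hy
      obtain ⟨a, b, rfl⟩ := Submodule.mem_span_pair.mp hy
      have h1 : ⟪e, j x⟫ = 0 := by
        have h2 : ⟪j e, j (j x)⟫ = ⟪e, j x⟫ := hji e (j x)
        rw [hj2, inner_neg_right] at h2
        have h3 : ⟪j e, x⟫ = 0 := hx (j e) hjeS
        rw [← h2, h3, neg_zero]
      have h4 : ⟪j e, j x⟫ = 0 := by rw [hji]; exact hx e heS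
      rw [inner_add_left, real_inner_smul_left, real_inner_smul_left, h1, h4]
      ring
    -- dimension of Sᗮ
    have honb2 : LinearIndependent ℝ ![e, j e] := by
      refine LinearIndependent.pair_iff.mpr ?_
      intro a b hab
      have h0 : ⟪e, a • e + b • j e⟫ = a := by
        rw [inner_add_right, real_inner_smul_right, real_inner_smul_right, horth,
          real_inner_self_eq_norm_mul_norm, he]
        ring
      have h1 : ⟪j e, a • e + b • j e⟫ = b := by
        rw [inner_add_right, real_inner_smul_right, real_inner_smul_right,
          real_inner_comm e (j e), horth, real_inner_self_eq_norm_mul_norm, hje]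
        ring
      rw [hab, inner_zero_right] at h0 h1
      exact ⟨h0.symm, h1.symm⟩
    have hSrank : finrank ℝ S = 2 := by
      have := finrank_span_eq_card honb2
      rw [hS_def]
      have hrange : Set.range ![e, j e] = {e, j e} := by
        simp [Matrix.range_cons, Matrix.range_empty, Set.pair_comm]
      rw [← hrange, this]
      simp
    have hWrank : 2 * q ≤ finrank ℝ Sᗮ := by
      have := S.finrank_add_finrank_orthogonal
      omega
    -- restrict j to Sᗮ
    set j' : Sᗮ →ₗ[ℝ] Sᗮ := j.restrict hWinv with hj'_def
    have hj'_coe : ∀ x : Sᗮ, (j' x : V) = j x := fun x => rfl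
    have hj2' : ∀ x : Sᗮ, j' (j' x) = -x := by
      intro x; apply Subtype.ext
      rw [hj'_coe, hj'_coe, hj2]; rfl
    have hji' : ∀ x y : Sᗮ, ⟪j' x, j' y⟫ = ⟪x, y⟫ := by
      intro x y
      rw [Submodule.coe_inner, Submodule.coe_inner, hj'_coe, hj'_coe, hji]
    obtain ⟨w, hw, hw2⟩ := ih Sᗮ j' hj2' hji' hWrank
    set v : Fin (q + 1) ⊕ Fin (q + 1) → V :=
      Sum.elim (Fin.cons e fun k => (w (Sum.inl k) : V))
        (Fin.cons (j e) fun k => (w (Sum.inr k) : V)) with hv_def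
    have hvW : ∀ k : Fin q ⊕ Fin q, (w k : V) ∈ Sᗮ := fun k => (w k).2
    have hSperp : ∀ (k : Fin q ⊕ Fin q) (y : V), y ∈ S → ⟪y, (w k : V)⟫ = 0 :=
      fun k y hy => (Submodule.mem_orthogonal S _).mp (hvW k) y hy
    have hwinner : ∀ k l : Fin q ⊕ Fin q, ⟪(w k : V), (w l : V)⟫ = if k = l then 1 else 0 := by
      intro k l
      have := orthonormal_iff_ite.mp hw k l
      rwa [Submodule.coe_inner] at this
    refine ⟨v, orthonormal_iff_ite.mpr ?_, ?_⟩
    · have hee : ⟪e, e⟫ = (1:ℝ) := by rw [real_inner_self_eq_norm_mul_norm, he]; ring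
      have hjeje : ⟪j e, j e⟫ = (1:ℝ) := by rw [real_inner_self_eq_norm_mul_norm, hje]; ring
      have hor2 : ⟪j e, e⟫ = (0:ℝ) := (real_inner_comm e (j e)).trans horth
      have hew : ∀ k, ⟪e, (w k : V)⟫ = (0:ℝ) := fun k => hSperp k e heS
      have hjew : ∀ k, ⟪j e, (w k : V)⟫ = (0:ℝ) := fun k => hSperp k (j e) hjeS
      have hwe : ∀ k, ⟪(w k : V), e⟫ = (0:ℝ) := fun k => (real_inner_comm e _).trans (hew k)
      have hwje : ∀ k, ⟪(w k : V), j e⟫ = (0:ℝ) := fun k => (real_inner_comm (j e) _).trans (hjew k)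
      rintro (i | i) (l | l) <;>
        induction i using Fin.cases <;> induction l using Fin.cases <;>
        simp only [hv_def, Sum.elim_inl, Sum.elim_inr, Fin.cons_zero, Fin.cons_succ] <;>
        simp [hee, hjeje, horth, hor2, hew, hjew, hwe, hwje, hwinner, Fin.succ_ne_zero, he, hje,
          (Fin.succ_ne_zero _).symm, Sum.inl.injEq, Sum.inr.injEq, Fin.succ_inj]
    · intro k
      refine Fin.cases ?_ (fun k' => ?_) k
      · simp [hv_def]
      · simp only [hv_def, Sum.elim_inl, Sum.elim_inr, Fin.cons_succ]
        rw [← hw2 k', hj'_coe]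

/-- Any orthogonal complex structure on `ℝ^{2q}` is conjugate to `J₀` by an
orthogonal matrix. -/
lemma exists_conj (q : ℕ) (J : Matrix (Fin q ⊕ Fin q) (Fin q ⊕ Fin q) ℝ)
    (h1 : Jᵀ * J = 1) (h2 : J * J = -1) :
    ∃ A : Matrix (Fin q ⊕ Fin q) (Fin q ⊕ Fin q) ℝ, Aᵀ * A = 1 ∧ A * J0 q * Aᵀ = J := by
  set j : EuclideanSpace ℝ (Fin q ⊕ Fin q) →ₗ[ℝ] EuclideanSpace ℝ (Fin q ⊕ Fin q) :=
    Matrix.toEuclideanLin J with hj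
  have hjapp : ∀ (x : EuclideanSpace ℝ (Fin q ⊕ Fin q)), j x = J *ᵥ x := fun _ => rfl
  have hj2 : ∀ x, j (j x) = -x := by
    intro x
    apply WithLp.ofLp_injective 2
    rw [hjapp, hjapp]
    show J *ᵥ (J *ᵥ x.ofLp) = -x.ofLp
    rw [Matrix.mulVec_mulVec, h2]
    show (-(1 : Matrix (Fin q ⊕ Fin q) (Fin q ⊕ Fin q) ℝ)) *ᵥ x.ofLp = -x.ofLp
    rw [Matrix.neg_mulVec, Matrix.one_mulVec]
  have hji : ∀ x y : EuclideanSpace ℝ (Fin q ⊕ Fin q), ⟪j x, j y⟫ = ⟪x, y⟫ := by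
    intro x y
    simp only [PiLp.inner_apply, RCLike.inner_apply, conj_trivial, hjapp]
    show (J *ᵥ y.ofLp) ⬝ᵥ (J *ᵥ x.ofLp) = y.ofLp ⬝ᵥ x.ofLp
    rw [← Matrix.vecMul_transpose, ← Matrix.dotProduct_mulVec, Matrix.mulVec_mulVec, h1,
      Matrix.one_mulVec]
  have hdim : 2 * q ≤ finrank ℝ (EuclideanSpace ℝ (Fin q ⊕ Fin q)) := by
    rw [finrank_euclideanSpace]
    simp
    omega
  obtain ⟨v, hv, hv2⟩ := ocs_family q (EuclideanSpace ℝ (Fin q ⊕ Fin q)) j hj2 hji hdim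
  have hvi := orthonormal_iff_ite.mp hv
  have hsum : ∀ (k' : Fin q ⊕ Fin q) (i : Fin q ⊕ Fin q),
      ∑ m, J i m * v k' m = (J *ᵥ v k') i := fun _ _ => rfl
  refine ⟨Matrix.of fun i k => v k i, ?_, ?_⟩
  · ext k l
    have := hvi k l
    simp only [PiLp.inner_apply, RCLike.inner_apply, conj_trivial] at this
    simp only [Matrix.mul_apply, Matrix.transpose_apply, Matrix.of_apply, Matrix.one_apply]
    rw [← this]; exact Finset.sum_congr rfl (fun _ _ => mul_comm _ _)
  · have hAAT : (Matrix.of fun i k => v k i) * (Matrix.of fun i k => v k i)ᵀ = 1 := by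
      rw [mul_eq_one_comm]
      ext k l
      have := hvi k l
      simp only [PiLp.inner_apply, RCLike.inner_apply, conj_trivial] at this
      simp only [Matrix.mul_apply, Matrix.transpose_apply, Matrix.of_apply, Matrix.one_apply]
      rw [← this]; exact Finset.sum_congr rfl (fun _ _ => mul_comm _ _)
    have hcomm : J * (Matrix.of fun i k => v k i) = (Matrix.of fun i k => v k i) * J0 q := by
      ext i k
      rcases k with a | a
      · have key : (J *ᵥ v (Sum.inl a) : (Fin q ⊕ Fin q) → ℝ) = v (Sum.inr a) :=
          (hjapp (v (Sum.inl a))).symm.trans (congrArg WithLp.ofLp (hv2 a))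
        have keyi := congrFun key i
        simp only [Matrix.mul_apply, Matrix.of_apply]
        rw [hsum, keyi, Fintype.sum_sum_type]
        simp [J0, Matrix.one_apply]
      · have hvinr : (J *ᵥ v (Sum.inr a) : (Fin q ⊕ Fin q) → ℝ) = -(v (Sum.inl a)) := by
          rw [← hjapp]
          rw [← hv2 a, hj2]
          rfl
        have keyi := congrFun hvinr i
        simp only [Matrix.mul_apply, Matrix.of_apply]
        rw [hsum, keyi, Fintype.sum_sum_type]
        simp [J0, Matrix.one_apply]
    calc (Matrix.of fun i k => v k i) * J0 q * (Matrix.of fun i k => v k i)ᵀ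
        = J * (Matrix.of fun i k => v k i) * (Matrix.of fun i k => v k i)ᵀ := by rw [hcomm]
      _ = J := by rw [Matrix.mul_assoc, hAAT, Matrix.mul_one]

end Aux

/-- The map `A ↦ A J₀ Aᵀ` induces a well-defined bijection from the quotient of the
orthogonal group `O(2q)` by the commutant of `J₀` onto the set of orthogonal complex
structures on `ℝ^{2q}`. -/
theorem twistor_fiber_homogeneous_space (q : ℕ) :
    ∃ e : (Matrix.orthogonalGroup (Fin q ⊕ Fin q) ℝ) ⧸ commutantJ0 q →
        {J : Matrix (Fin q ⊕ Fin q) (Fin q ⊕ Fin q) ℝ // Jᵀ * J = 1 ∧ J * J = -1},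
      Function.Bijective e ∧
      ∀ A : Matrix.orthogonalGroup (Fin q ⊕ Fin q) ℝ,
        (e (QuotientGroup.mk A) : Matrix (Fin q ⊕ Fin q) (Fin q ⊕ Fin q) ℝ) =
          (A : Matrix (Fin q ⊕ Fin q) (Fin q ⊕ Fin q) ℝ) * J0 q *
            (A : Matrix (Fin q ⊕ Fin q) (Fin q ⊕ Fin q) ℝ)ᵀ := by
  classical
  set O := Matrix.orthogonalGroup (Fin q ⊕ Fin q) ℝ with hO
  -- basic coercion facts
  have hstar : ∀ A : O, star (A : Matrix (Fin q ⊕ Fin q) (Fin q ⊕ Fin q) ℝ) =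
      (A : Matrix (Fin q ⊕ Fin q) (Fin q ⊕ Fin q) ℝ)ᵀ := by
    intro A
    rw [Matrix.star_eq_conjTranspose, Matrix.conjTranspose_eq_transpose_of_trivial]
  have hinv : ∀ A : O, ((A⁻¹ : O) : Matrix (Fin q ⊕ Fin q) (Fin q ⊕ Fin q) ℝ) =
      (A : Matrix (Fin q ⊕ Fin q) (Fin q ⊕ Fin q) ℝ)ᵀ := by
    intro A
    rw [← Unitary.star_eq_inv, Unitary.coe_star, hstar]
  -- the conjugation map inside the group
  set F : O → O := fun A => A * J0ₒ q * A⁻¹ with hF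
  have hFcoe : ∀ A : O, ((F A : O) : Matrix (Fin q ⊕ Fin q) (Fin q ⊕ Fin q) ℝ) =
      (A : Matrix (Fin q ⊕ Fin q) (Fin q ⊕ Fin q) ℝ) * J0 q *
        (A : Matrix (Fin q ⊕ Fin q) (Fin q ⊕ Fin q) ℝ)ᵀ := by
    intro A
    rw [hF]
    push_cast [hinv]
    rfl
  have hJ0sq : J0 q * J0 q = -1 := by
    ext i k
    rcases i with a | a <;> rcases k with b | b <;>
      simp [J0, Matrix.fromBlocks_multiply, Matrix.one_apply]
  -- the target map
  have hprop : ∀ A : O, ((F A : O) : Matrix (Fin q ⊕ Fin q) (Fin q ⊕ Fin q) ℝ)ᵀ *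
      ((F A : O) : Matrix (Fin q ⊕ Fin q) (Fin q ⊕ Fin q) ℝ) = 1 ∧
      ((F A : O) : Matrix (Fin q ⊕ Fin q) (Fin q ⊕ Fin q) ℝ) *
      ((F A : O) : Matrix (Fin q ⊕ Fin q) (Fin q ⊕ Fin q) ℝ) = -1 := by
    intro A
    constructor
    · have := (F A).2.1
      rwa [hstar] at this
    · obtain ⟨hA1, hA2⟩ := A.2
      rw [hstar] at hA1 hA2
      rw [hFcoe]
      calc ((A : Matrix (Fin q ⊕ Fin q) (Fin q ⊕ Fin q) ℝ) * J0 q *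
            (A : Matrix (Fin q ⊕ Fin q) (Fin q ⊕ Fin q) ℝ)ᵀ) *
            ((A : Matrix (Fin q ⊕ Fin q) (Fin q ⊕ Fin q) ℝ) * J0 q *
            (A : Matrix (Fin q ⊕ Fin q) (Fin q ⊕ Fin q) ℝ)ᵀ)
          = (A : Matrix (Fin q ⊕ Fin q) (Fin q ⊕ Fin q) ℝ) * (J0 q *
            ((A : Matrix (Fin q ⊕ Fin q) (Fin q ⊕ Fin q) ℝ)ᵀ *
            (A : Matrix (Fin q ⊕ Fin q) (Fin q ⊕ Fin q) ℝ)) * J0 q) *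
            (A : Matrix (Fin q ⊕ Fin q) (Fin q ⊕ Fin q) ℝ)ᵀ := by
            simp only [Matrix.mul_assoc]
        _ = -1 := by
            rw [hA1, Matrix.mul_one, hJ0sq]
            simp only [Matrix.mul_neg, Matrix.neg_mul, Matrix.mul_one]
            rw [hA2]
  set f : O → {J : Matrix (Fin q ⊕ Fin q) (Fin q ⊕ Fin q) ℝ // Jᵀ * J = 1 ∧ J * J = -1} :=
    fun A => ⟨((F A : O) : Matrix (Fin q ⊕ Fin q) (Fin q ⊕ Fin q) ℝ), hprop A⟩ with hf
  -- key: f A = f B ↔ A⁻¹ * B ∈ commutant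
  have hkey : ∀ A B : O, f A = f B ↔ A⁻¹ * B ∈ commutantJ0 q := by
    intro A B
    rw [commutantJ0, Subgroup.mem_centralizer_singleton_iff]
    constructor
    · intro h
      have hval : (f A).1 = (f B).1 := congrArg Subtype.val h
      have hFB : F A = F B := Subtype.ext hval
      have : A * J0ₒ q * A⁻¹ = B * J0ₒ q * B⁻¹ := hFB
      calc A⁻¹ * B * J0ₒ q
          = A⁻¹ * (B * J0ₒ q * B⁻¹) * B := by group
        _ = A⁻¹ * (A * J0ₒ q * A⁻¹) * B := by rw [this]
        _ = J0ₒ q * (A⁻¹ * B) := by group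
    · intro h
      have : A * J0ₒ q * A⁻¹ = B * J0ₒ q * B⁻¹ := by
        have h2 : J0ₒ q * (A⁻¹ * B) = A⁻¹ * B * J0ₒ q := h.symm
        calc A * J0ₒ q * A⁻¹
            = A * (J0ₒ q * (A⁻¹ * B)) * B⁻¹ := by group
          _ = A * (A⁻¹ * B * J0ₒ q) * B⁻¹ := by rw [h2]
          _ = B * J0ₒ q * B⁻¹ := by group
      apply Subtype.ext
      show ((F A : O) : Matrix (Fin q ⊕ Fin q) (Fin q ⊕ Fin q) ℝ) = _
      exact congrArg Subtype.val (show F A = F B from this)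
  -- define e by lifting f
  refine ⟨Quotient.lift f ?_, ⟨?_, ?_⟩, ?_⟩
  · intro a b hab
    exact (hkey a b).mpr ((QuotientGroup.leftRel_apply).mp hab)
  · -- injective
    intro x y
    induction x using Quotient.ind
    induction y using Quotient.ind
    intro h
    rename_i a b
    have : a⁻¹ * b ∈ commutantJ0 q := (hkey a b).mp h
    exact (QuotientGroup.eq (s := commutantJ0 q)).mpr this
  · -- surjective
    rintro ⟨J, hJ1, hJ2⟩
    obtain ⟨A, hA1, hA2⟩ := exists_conj q J hJ1 hJ2
    have hmem : A ∈ O := by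
      constructor
      · rw [Matrix.star_eq_conjTranspose, Matrix.conjTranspose_eq_transpose_of_trivial]
        exact hA1
      · rw [Matrix.star_eq_conjTranspose, Matrix.conjTranspose_eq_transpose_of_trivial]
        exact mul_eq_one_comm.mp hA1
    refine ⟨QuotientGroup.mk (⟨A, hmem⟩ : O), ?_⟩
    apply Subtype.ext
    show ((F ⟨A, hmem⟩ : O) : Matrix (Fin q ⊕ Fin q) (Fin q ⊕ Fin q) ℝ) = J
    rw [hFcoe]
    exact hA2
  · -- the formula
    intro A
    show ((F A : O) : Matrix (Fin q ⊕ Fin q) (Fin q ⊕ Fin q) ℝ) = _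
    rw [hFcoe]
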